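/- Every element of the group G generated by the shift σ and the local permutations of {0,1}^ℤ can be written uniquely as σ^n ∘ f with n ∈ ℤ and f a local permutation. -/
import Mathlib


noncomputable section

/-- The full binary shift space `{0,1}^ℤ`. -/
abbrev X : Type := ℤ → ZMod 2

instance : Group (X ≃ₜ X) where
  mul f g := g.trans f
  one := Homeomorph.refl X
  inv := Homeomorph.symm
  mul_assoc f g h := rfl
  one_mul f := Homeomorph.ext fun _ => rfl
  mul_one f := Homeomorph.ext fun _ => rfl
  inv_mul_cancel f := Homeomorph.ext fun x => f.symm_apply_apply x

/-- The shift `σ^n`, `σ^n(x)_i = x_{i+n}`. -/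
def shiftPow (n : ℤ) : X ≃ₜ X where
  toFun x i := x (i + n)
  invFun x i := x (i - n)
  left_inv x := funext fun i => congrArg x (by ring)
  right_inv x := funext fun i => congrArg x (by ring)
  continuous_toFun := continuous_pi fun i => continuous_apply (i + n)
  continuous_invFun := continuous_pi fun i => continuous_apply (i - n)

/-- The shift `σ`. -/
def shiftHomeo : X ≃ₜ X := shiftPow 1

/-- A local permutation: a self-homeomorphism fixing all coordinates outside a bounded interval. -/
def IsLocalPerm (f : X ≃ₜ X) : Prop :=
  ∃ r : ℤ, ∀ (x : X) (i : ℤ), r ≤ |i| → f x i = x i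

/-- The group `G` generated by the shift and the local permutations. -/
def Ggrp : Subgroup (X ≃ₜ X) :=
  Subgroup.closure ({shiftHomeo} ∪ {f | IsLocalPerm f})

/-- Build a homeomorphism of `X` from an involutive continuous map. -/
def mkInvHomeo (F : X → X) (h : Function.Involutive F) (hc : Continuous F) : X ≃ₜ X :=
  ⟨Function.Involutive.toPerm F h, hc, hc⟩

-- helpers
lemma shiftPow_apply (n : ℤ) (x : X) (i : ℤ) : shiftPow n x i = x (i + n) := rfl

lemma local_refl : IsLocalPerm (Homeomorph.refl X) := ⟨0, fun _ _ _ => rfl⟩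

lemma local_trans {f h : X ≃ₜ X} (hf : IsLocalPerm f) (hh : IsLocalPerm h) :
    IsLocalPerm (f.trans h) := by
  obtain ⟨r1, h1⟩ := hf
  obtain ⟨r2, h2⟩ := hh
  refine ⟨max r1 r2, fun x i hi => ?_⟩
  have e1 : h (f x) i = f x i := h2 _ i (le_trans (le_max_right _ _) hi)
  have e2 : f x i = x i := h1 x i (le_trans (le_max_left _ _) hi)
  exact e1.trans e2

lemma local_symm {f : X ≃ₜ X} (hf : IsLocalPerm f) : IsLocalPerm f.symm := by
  obtain ⟨r, h1⟩ := hf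
  refine ⟨r, fun x i hi => ?_⟩
  have := h1 (f.symm x) i hi
  rw [f.apply_symm_apply] at this
  exact this.symm

lemma local_conj (n : ℤ) {f : X ≃ₜ X} (hf : IsLocalPerm f) :
    IsLocalPerm ((shiftPow n).trans (f.trans (shiftPow (-n)))) := by
  obtain ⟨r, h1⟩ := hf
  refine ⟨r + |n|, fun x i hi => ?_⟩
  have hb : r ≤ |i + -n| := by
    have e : i + -n = i - n := by ring
    have : |i| - |n| ≤ |i - n| := abs_sub_abs_le_abs_sub i n
    rw [e]
    omega
  show f (shiftPow n x) (i + -n) = x i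
  rw [h1 (shiftPow n x) (i + -n) hb]
  exact congrArg x (by ring)

lemma shift_local_zero {n : ℤ} (h : IsLocalPerm (shiftPow n)) : n = 0 := by
  by_contra hn
  obtain ⟨r, h1⟩ := h
  set x : X := fun j => if j = |r| + n then 1 else 0 with hx
  have := h1 x |r| (le_abs_self r |>.trans (le_of_eq (abs_abs r).symm))
  rw [shiftPow_apply] at this
  have ha : x (|r| + n) = 1 := if_pos rfl
  have hb : x |r| = (0 : ZMod 2) := if_neg (by omega)
  rw [ha, hb] at this
  exact one_ne_zero this

/-- Every element of `G` can be written uniquely as `σ^n ∘ f` with `f` a local permutation. -/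
theorem stmt6 (g : X ≃ₜ X) (hg : g ∈ Ggrp) :
    ∃! nf : ℤ × (X ≃ₜ X), IsLocalPerm nf.2 ∧ g = nf.2.trans (shiftPow nf.1) := by
  have hex : ∃ n : ℤ, ∃ f : X ≃ₜ X, IsLocalPerm f ∧ g = f.trans (shiftPow n) := by
    refine Subgroup.closure_induction
      (p := fun g _ => ∃ n : ℤ, ∃ f : X ≃ₜ X, IsLocalPerm f ∧ g = f.trans (shiftPow n))
      ?_ ?_ ?_ ?_ hg
    · rintro a (ha | ha)
      · refine ⟨1, Homeomorph.refl X, local_refl, ?_⟩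
        rw [Set.mem_singleton_iff] at ha
        subst ha
        exact Homeomorph.ext fun x => rfl
      · exact ⟨0, a, ha, Homeomorph.ext fun x => funext fun i =>
          (congrArg (a x) (add_zero i)).symm⟩
    · exact ⟨0, Homeomorph.refl X, local_refl, Homeomorph.ext fun x => funext fun i =>
        (congrArg x (add_zero i)).symm⟩
    · rintro a b _ _ ⟨n, f, hf, rfl⟩ ⟨m, h, hh, rfl⟩
      refine ⟨n + m, h.trans ((shiftPow m).trans (f.trans (shiftPow (-m)))),
        local_trans hh (local_conj m hf), Homeomorph.ext fun x => funext fun i => ?_⟩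
      show f (shiftPow m (h x)) (i + n) = f (shiftPow m (h x)) (i + (n + m) + -m)
      exact congrArg _ (by ring)
    · rintro a _ ⟨n, f, hf, rfl⟩
      have hconj : IsLocalPerm ((shiftPow (-n)).trans (f.symm.trans (shiftPow n))) := by
        have := local_conj (-n) (local_symm hf)
        rwa [neg_neg] at this
      refine ⟨-n, (shiftPow (-n)).trans (f.symm.trans (shiftPow n)), hconj,
        Homeomorph.ext fun x => funext fun i => ?_⟩
      show f.symm ((shiftPow n).symm x) i = shiftPow n (f.symm (shiftPow (-n) x)) (i + -n)
      have hAB : (shiftPow n).symm x = shiftPow (-n) x :=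
        funext fun j => congrArg x (by ring)
      rw [hAB]
      show f.symm (shiftPow (-n) x) i = f.symm (shiftPow (-n) x) (i + -n + n)
      exact congrArg _ (by ring)
  obtain ⟨n, f, hf, hgf⟩ := hex
  refine ⟨(n, f), ⟨hf, hgf⟩, ?_⟩
  rintro ⟨m, h⟩ ⟨hh, hgh⟩
  have key : ∀ (x : X) (i : ℤ), h x (i + m) = f x (i + n) := fun x i =>
    congrFun (congrArg (fun (e : X ≃ₜ X) => e x) (hgh.symm.trans hgf)) i
  have hsh : f.symm.trans h = shiftPow (n - m) := by
    refine Homeomorph.ext fun x => funext fun i => ?_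
    have k := key (f.symm x) (i - m)
    rw [f.apply_symm_apply] at k
    have e : i - m + m = i := by ring
    rw [e] at k
    show h (f.symm x) i = x (i + (n - m))
    exact k.trans (congrArg x (by ring))
  have hnm : n - m = 0 := shift_local_zero (hsh ▸ local_trans (local_symm hf) hh)
  have hmn : m = n := by omega
  subst hmn
  have hfh : h = f := by
    refine Homeomorph.ext fun x => funext fun i => ?_
    have k := key x (i - m)
    have e : i - m + m = i := by ring
    rw [e] at k
    exact k
  rw [hfh]
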